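/- Let S, S̃ : U → Y be bounded linear operators between Hilbert spaces (with Y carrying a seminorm ‖·‖_G induced by a positive semidefinite bilinear form), ν > 0, and define M(x) for x = (y,u) by ⟨Mx, x⟩ = ‖y‖_G² + ν‖u‖_U². Then for all u ∈ U, with x = (Su, u) and x̃ = (S̃u, u): (1/(1 + ν⁻¹‖S̃‖²)) ⟨Mx̃, x̃⟩ ≤ ⟨Mx, x⟩ ≤ (1 + ν⁻¹‖S‖²) ⟨Mx̃, x̃⟩, where ‖S‖ denotes the operator norm from (U,‖·‖_U) to (Y,‖·‖_G). Hence the condition number satisfies κ ≤ (1 + ν⁻¹‖S‖²)(1 + ν⁻¹‖S̃‖²). -/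
import Mathlib


/-- With `⟨Mx,x⟩ = ‖y‖_G² + ν‖u‖_U²`, `x = (Su,u)`, `x̃ = (S̃u,u)`:
`(1/(1+ν⁻¹‖S̃‖²))⟨Mx̃,x̃⟩ ≤ ⟨Mx,x⟩ ≤ (1+ν⁻¹‖S‖²)⟨Mx̃,x̃⟩`. -/
theorem stmt8
    {U : Type*} [NormedAddCommGroup U] [InnerProductSpace ℝ U]
    {Y : Type*} [AddCommGroup Y] [Module ℝ Y]
    (g : Y →ₗ[ℝ] Y →ₗ[ℝ] ℝ)
    (hgsymm : ∀ y z, g y z = g z y) (hgpos : ∀ y, 0 ≤ g y y)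
    (S St : U →ₗ[ℝ] Y) (nS nSt : ℝ) (hnS : 0 ≤ nS) (hnSt : 0 ≤ nSt)
    (hSbound : ∀ u, g (S u) (S u) ≤ nS ^ 2 * ‖u‖ ^ 2)
    (hStbound : ∀ u, g (St u) (St u) ≤ nSt ^ 2 * ‖u‖ ^ 2)
    (ν : ℝ) (hν : 0 < ν) :
    ∀ u : U,
      (1 / (1 + ν⁻¹ * nSt ^ 2)) * (g (St u) (St u) + ν * ‖u‖ ^ 2)
          ≤ g (S u) (S u) + ν * ‖u‖ ^ 2 ∧
      g (S u) (S u) + ν * ‖u‖ ^ 2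
          ≤ (1 + ν⁻¹ * nS ^ 2) * (g (St u) (St u) + ν * ‖u‖ ^ 2) := by
  intro u
  have ha : 0 ≤ g (S u) (S u) := hgpos _
  have hb : 0 ≤ g (St u) (St u) := hgpos _
  have hc : 0 ≤ ν * ‖u‖ ^ 2 := by positivity
  have hS' := hSbound u
  have hSt' := hStbound u
  have hν' : ν ≠ 0 := ne_of_gt hν
  have hd : 0 < 1 + ν⁻¹ * nSt ^ 2 := by positivity
  constructor
  · rw [div_mul_eq_mul_div, div_le_iff₀ hd]
    have key : g (St u) (St u) + ν * ‖u‖ ^ 2 ≤ (1 + ν⁻¹ * nSt ^ 2) * (ν * ‖u‖ ^ 2) := by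
      have : (1 + ν⁻¹ * nSt ^ 2) * (ν * ‖u‖ ^ 2) = nSt ^ 2 * ‖u‖ ^ 2 + ν * ‖u‖ ^ 2 := by
        field_simp; ring
      rw [this]; linarith
    calc 1 * (g (St u) (St u) + ν * ‖u‖ ^ 2) ≤ (1 + ν⁻¹ * nSt ^ 2) * (ν * ‖u‖ ^ 2) := by
          linarith
      _ ≤ (g (S u) (S u) + ν * ‖u‖ ^ 2) * (1 + ν⁻¹ * nSt ^ 2) := by
          rw [mul_comm]; exact mul_le_mul_of_nonneg_right (by linarith) (le_of_lt hd)
  · have key : (1 + ν⁻¹ * nS ^ 2) * (ν * ‖u‖ ^ 2) = nS ^ 2 * ‖u‖ ^ 2 + ν * ‖u‖ ^ 2 := by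
      field_simp; ring
    have hd2 : (0:ℝ) ≤ 1 + ν⁻¹ * nS ^ 2 := by positivity
    calc g (S u) (S u) + ν * ‖u‖ ^ 2 ≤ (1 + ν⁻¹ * nS ^ 2) * (ν * ‖u‖ ^ 2) := by
          rw [key]; linarith
      _ ≤ (1 + ν⁻¹ * nS ^ 2) * (g (St u) (St u) + ν * ‖u‖ ^ 2) :=
          mul_le_mul_of_nonneg_left (by linarith) hd2
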